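/- Let A, B be tadpole matrices with head parameters k, ℓ ∈ {1,…,p−1} satisfying k + ℓ ≢ 0 (mod p) (so that none of A, B, AB is diagonal). Then σ(AB) ⊆ σ(A)·σ(B). -/

import Mathlib

open Matrix
open Fin.NatCast

/-- The `p × p` cyclic permutation matrix. -/
def cycleMatrix (p : ℕ) : Matrix (Fin p) (Fin p) ℂ :=
  Matrix.of fun i j => if (j : ℕ) = ((i : ℕ) + 1) % p then 1 else 0

/-- The fixed primitive `p²`-th root of unity `ξ = e^{2πi/p²}`. -/
noncomputable def xi (p : ℕ) : ℂ := Complex.exp (2 * Real.pi * Complex.I / (p ^ 2))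

/-- The tadpole matrix with head `D C^k` (where `D = diagonal d`) and tail
`diag(ξ^{0·k + a_0 p}, ξ^{1·k + a_1 p}, …, ξ^{(p-1)k + a_{p-1} p})`.
We index the `2p × 2p` matrix by `Fin p ⊕ Fin p`. -/
noncomputable def tadpole (p : ℕ) (d : Fin p → ℂ) (k : ℕ) (a : Fin p → ℕ) :
    Matrix (Fin p ⊕ Fin p) (Fin p ⊕ Fin p) ℂ :=
  Matrix.fromBlocks (Matrix.diagonal d * cycleMatrix p ^ k) 0 0
    (Matrix.diagonal fun j : Fin p => xi p ^ ((j : ℕ) * k + a j * p))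

/-- Membership in the set `𝒯` of tadpole matrices: `D` is unitary diagonal of
determinant one, `k ∈ {0, …, p-1}`, `a_j ∈ {0, …, p-1}` and `a_0 = 0` (so the first
tail entry is `1`). -/
def IsTadpole (p : ℕ) (A : Matrix (Fin p ⊕ Fin p) (Fin p ⊕ Fin p) ℂ) : Prop :=
  ∃ (d : Fin p → ℂ) (k : ℕ) (a : Fin p → ℕ),
    (∀ i, ‖d i‖ = 1) ∧ (∏ i, d i = 1) ∧ k < p ∧ (∀ j, a j < p) ∧
    (∀ j : Fin p, (j : ℕ) = 0 → a j = 0) ∧ A = tadpole p d k a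


section Helpers

open Polynomial Matrix

private lemma fin_val_add_natCast {p : ℕ} [NeZero p] (i : Fin p) (m : ℕ) :
    (((i + (m : Fin p)) : Fin p) : ℕ) = ((i : ℕ) + m) % p := by
  rw [Fin.val_add, Fin.val_natCast, Nat.add_mod_mod]

private lemma cycleMatrix_apply' {p : ℕ} [NeZero p] (i j : Fin p) :
    cycleMatrix p i j = if j = i + 1 then 1 else 0 := by
  show (if ((j:ℕ) = ((i:ℕ)+1) % p) then (1:ℂ) else 0) = _
  congr 1
  rw [eq_iff_iff, Fin.ext_iff, Fin.val_add, Fin.val_one', Nat.add_mod_mod]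

private lemma cycleMatrix_pow {p : ℕ} [NeZero p] (m : ℕ) :
    cycleMatrix p ^ m
      = Matrix.of (fun i j : Fin p => if j = i + (m : Fin p) then 1 else 0) := by
  induction m with
  | zero =>
    ext i j
    simp [Matrix.one_apply, eq_comm]
  | succ m ih =>
    rw [pow_succ, ih]
    ext i j
    rw [Matrix.mul_apply]
    simp only [Matrix.of_apply, cycleMatrix_apply', ite_mul, one_mul, zero_mul]
    rw [Finset.sum_ite_eq' (Finset.univ : Finset (Fin p)) (i + (m : Fin p))
      (fun x => if j = x + 1 then (1:ℂ) else 0)]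
    simp only [Finset.mem_univ, if_true]
    have : ((m + 1 : ℕ) : Fin p) = (m : Fin p) + 1 := by push_cast; ring
    rw [this, add_assoc]

private lemma cycleMatrix_pow_mulVec {p : ℕ} [NeZero p] (m : ℕ) (v : Fin p → ℂ) :
    (cycleMatrix p ^ m).mulVec v = fun i => v (i + (m : Fin p)) := by
  ext i
  rw [cycleMatrix_pow, Matrix.mulVec]
  simp only [Matrix.of_apply, dotProduct, ite_mul, one_mul, zero_mul]
  rw [Finset.sum_ite_eq' (Finset.univ : Finset (Fin p)) (i + (m : Fin p)) v]
  simp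

private lemma cycleMatrix_pow_mul_diagonal {p : ℕ} [NeZero p] (m : ℕ) (e : Fin p → ℂ) :
    cycleMatrix p ^ m * Matrix.diagonal e
      = Matrix.diagonal (fun i => e (i + (m : Fin p))) * cycleMatrix p ^ m := by
  rw [cycleMatrix_pow]
  ext i j
  rw [Matrix.mul_apply, Matrix.mul_apply]
  simp only [Matrix.of_apply, Matrix.diagonal_apply, ite_mul, mul_ite, mul_zero, zero_mul,
    one_mul, mul_one, Finset.sum_ite_eq, Finset.sum_ite_eq', Finset.mem_univ, if_true]
  by_cases h : j = i + (m : Fin p)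
  · simp [h, eq_comm]
  · simp only [h, if_false]
    symm
    apply Finset.sum_eq_zero
    intro x _
    by_cases hx : i = x
    · subst hx; simp [h]
    · simp [hx]

private lemma mem_spectrum_iff_det {n : Type*} [Fintype n] [DecidableEq n]
    (M : Matrix n n ℂ) (x : ℂ) :
    x ∈ spectrum ℂ M ↔ (x • (1 : Matrix n n ℂ) - M).det = 0 := by
  rw [spectrum.mem_iff, Algebra.algebraMap_eq_smul_one, Matrix.isUnit_iff_isUnit_det,
    isUnit_iff_ne_zero, not_ne_iff]

private lemma charpoly_eval {n : Type*} [DecidableEq n] [Fintype n]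
    (M : Matrix n n ℂ) (x : ℂ) :
    M.charpoly.eval x = (x • (1 : Matrix n n ℂ) - M).det := by
  rw [Matrix.charpoly, ← Polynomial.coe_evalRingHom, RingHom.map_det]
  congr 1
  ext i j
  by_cases h : i = j <;>
    simp [Matrix.charmatrix_apply, h, Matrix.one_apply, Matrix.diagonal_apply]

private lemma det_smul_one_sub_fromBlocks {n m : Type*} [Fintype n] [Fintype m]
    [DecidableEq n] [DecidableEq m] (H : Matrix n n ℂ) (T : Matrix m m ℂ) (x : ℂ) :
    (x • (1 : Matrix (n ⊕ m) (n ⊕ m) ℂ) - Matrix.fromBlocks H 0 0 T).det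
      = (x • (1 : Matrix n n ℂ) - H).det * (x • (1 : Matrix m m ℂ) - T).det := by
  have h1 : x • (1 : Matrix (n ⊕ m) (n ⊕ m) ℂ) - Matrix.fromBlocks H 0 0 T
      = Matrix.fromBlocks (x • 1 - H) 0 0 (x • 1 - T) := by
    rw [← Matrix.fromBlocks_one, Matrix.fromBlocks_smul]
    ext (i | i) (j | j) <;>
      simp [Matrix.fromBlocks]
  rw [h1, Matrix.det_fromBlocks_zero₂₁]

private lemma det_smul_one_sub_diagonal {n : Type*} [Fintype n] [DecidableEq n]
    (v : n → ℂ) (x : ℂ) :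
    (x • (1 : Matrix n n ℂ) - Matrix.diagonal v).det = ∏ i, (x - v i) := by
  have : x • (1 : Matrix n n ℂ) - Matrix.diagonal v
      = Matrix.diagonal (fun i => x - v i) := by
    ext i j
    by_cases h : i = j <;>
      simp [Matrix.sub_apply, Matrix.smul_apply, Matrix.one_apply, Matrix.diagonal_apply, h]
  rw [this, Matrix.det_diagonal]

private lemma eigen_det {p : ℕ} (hp : p.Prime) (d : Fin p → ℂ) (hd : ∏ i, d i = 1)
    (m : ℕ) (hm : ¬ p ∣ m) {ω : ℂ} (hω : ω ^ p = 1) :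
    (ω • (1 : Matrix (Fin p) (Fin p) ℂ) - Matrix.diagonal d * cycleMatrix p ^ m).det = 0 := by
  haveI : NeZero p := ⟨hp.ne_zero⟩
  haveI := Fact.mk hp
  haveI : Fact (1 < p) := ⟨hp.one_lt⟩
  have hμ0 : (m : ZMod p) ≠ 0 := by
    rw [Ne, ZMod.natCast_eq_zero_iff]; exact hm
  set μ : ZMod p := (m : ZMod p) with hμdef
  set idx : ℕ → Fin p := fun s => ⟨(s * m) % p, Nat.mod_lt _ hp.pos⟩ with hidxdef
  set T : Fin p → ℕ := fun j => (((j : ℕ) : ZMod p) * μ⁻¹).val with hTdef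
  have hTlt : ∀ j, T j < p := fun j => ZMod.val_lt _
  have hidxval : ∀ s : ℕ, ((idx s : ℕ) : ZMod p) = (s : ZMod p) * μ := by
    intro s
    show (((s * m) % p : ℕ) : ZMod p) = _
    rw [ZMod.natCast_mod]
    push_cast
    rfl
  have hTidx : ∀ s : ℕ, s < p → T (idx s) = s := by
    intro s hs
    show (((idx s : ℕ) : ZMod p) * μ⁻¹).val = s
    rw [hidxval, mul_assoc, mul_inv_cancel₀ hμ0, mul_one, ZMod.val_natCast,
      Nat.mod_eq_of_lt hs]
  have hidxT : ∀ j : Fin p, idx (T j) = j := by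
    intro j
    have hcast : ((idx (T j) : ℕ) : ZMod p) = ((j : ℕ) : ZMod p) := by
      rw [hidxval]
      show ((((((j:ℕ) : ZMod p) * μ⁻¹).val : ℕ)) : ZMod p) * μ = _
      rw [ZMod.natCast_val, ZMod.cast_id, mul_assoc, inv_mul_cancel₀ hμ0, mul_one]
    apply Fin.ext
    have := congrArg ZMod.val hcast
    rwa [ZMod.val_natCast, ZMod.val_natCast, Nat.mod_eq_of_lt (idx (T j)).isLt,
      Nat.mod_eq_of_lt j.isLt] at this
  set v : Fin p → ℂ := fun j => ω ^ (T j) * ∏ s ∈ Finset.Ico (T j) p, d (idx s) with hvdef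
  have hvfull : ∏ s ∈ Finset.Ico 0 p, d (idx s) = 1 := by
    rw [← hd, show Finset.Ico 0 p = Finset.range p from by rw [Finset.range_eq_Ico]]
    apply Finset.prod_bij (fun s (_ : s ∈ Finset.range p) => idx s)
    · intro s hs; exact Finset.mem_univ _
    · intro s hs s' hs' h
      have := congrArg T h
      rwa [hTidx s (Finset.mem_range.mp hs), hTidx s' (Finset.mem_range.mp hs')] at this
    · intro j _
      exact ⟨T j, Finset.mem_range.mpr (hTlt j), hidxT j⟩
    · intro s hs; rfl
  have hTj : ∀ j : Fin p, T (j + (m : Fin p)) = (T j + 1) % p := by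
    intro j
    show ((((j + (m : Fin p) : Fin p) : ℕ) : ZMod p) * μ⁻¹).val = _
    rw [fin_val_add_natCast, ZMod.natCast_mod]
    push_cast
    rw [add_mul, mul_inv_cancel₀ hμ0]
    rw [ZMod.val_add, ZMod.val_one]
  have hrec : ∀ j : Fin p, d j * v (j + (m : Fin p)) = ω * v j := by
    intro j
    have hT : T j < p := hTlt j
    have hprodsplit : ∏ s ∈ Finset.Ico (T j) p, d (idx s)
        = d (idx (T j)) * ∏ s ∈ Finset.Ico (T j + 1) p, d (idx s) :=
      Finset.prod_eq_prod_Ico_succ_bot hT _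
    rcases Nat.lt_or_ge (T j + 1) p with h | h
    · have hTj' : T (j + (m : Fin p)) = T j + 1 := by
        rw [hTj j, Nat.mod_eq_of_lt h]
      show d j * (ω ^ (T (j + (m : Fin p))) * ∏ s ∈ Finset.Ico (T (j + (m : Fin p))) p, d (idx s))
          = ω * (ω ^ (T j) * ∏ s ∈ Finset.Ico (T j) p, d (idx s))
      rw [hTj', hprodsplit]
      conv_lhs => rw [show d j = d (idx (T j)) from by rw [hidxT j]]
      ring
    · have hTp : T j + 1 = p := le_antisymm hT h
      have hTj' : T (j + (m : Fin p)) = 0 := by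
        rw [hTj j, hTp, Nat.mod_self]
      show d j * (ω ^ (T (j + (m : Fin p))) * ∏ s ∈ Finset.Ico (T (j + (m : Fin p))) p, d (idx s))
          = ω * (ω ^ (T j) * ∏ s ∈ Finset.Ico (T j) p, d (idx s))
      rw [hTj', pow_zero, one_mul, hvfull, mul_one]
      have hIco : Finset.Ico (T j) p = {T j} := by
        rw [← hTp]; exact Nat.Ico_succ_singleton _
      rw [hIco, Finset.prod_singleton]
      conv_lhs => rw [show d j = d (idx (T j)) from by rw [hidxT j]]
      rw [← mul_assoc, ← pow_succ', hTp, hω, one_mul]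
  have hvec : (Matrix.diagonal d * cycleMatrix p ^ m).mulVec v = ω • v := by
    ext i
    rw [← Matrix.mulVec_mulVec, cycleMatrix_pow_mulVec, Matrix.mulVec_diagonal]
    show d i * v (i + (m : Fin p)) = ω * v i
    exact hrec i
  have hv0 : v ≠ 0 := by
    intro h
    have h0 : v (idx 0) = 1 := by
      show ω ^ (T (idx 0)) * ∏ s ∈ Finset.Ico (T (idx 0)) p, d (idx s) = 1
      rw [hTidx 0 hp.pos, pow_zero, one_mul, hvfull]
    rw [h] at h0
    simp at h0
  rw [← Matrix.exists_mulVec_eq_zero_iff]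
  refine ⟨v, hv0, ?_⟩
  rw [Matrix.sub_mulVec, Matrix.smul_mulVec, Matrix.one_mulVec, hvec, sub_self]

private lemma pow_eq_one_of_det {p : ℕ} (hp : p.Prime) (d : Fin p → ℂ) (hd : ∏ i, d i = 1)
    (m : ℕ) (hm : ¬ p ∣ m) (lam : ℂ)
    (h : (lam • (1 : Matrix (Fin p) (Fin p) ℂ)
        - Matrix.diagonal d * cycleMatrix p ^ m).det = 0) :
    lam ^ p = 1 := by
  haveI : NeZero p := ⟨hp.ne_zero⟩
  set M : Matrix (Fin p) (Fin p) ℂ := Matrix.diagonal d * cycleMatrix p ^ m with hM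
  have hmonic : M.charpoly.Monic := Matrix.charpoly_monic M
  have hdeg : M.charpoly.natDegree = p := by
    rw [Matrix.charpoly_natDegree_eq_dim, Fintype.card_fin]
  have hcp : M.charpoly = X ^ p - 1 := by
    rw [← sub_eq_zero]
    set q : Polynomial ℂ := M.charpoly - (X ^ p - 1) with hqdef
    rcases eq_or_ne q 0 with h0 | h0
    · exact h0
    have hqd : q.degree < (p : ℕ) := by
      have hsplit : q = (M.charpoly - X ^ p) + 1 := by rw [hqdef]; ring
      rw [hsplit]
      apply lt_of_le_of_lt (Polynomial.degree_add_le _ _)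
      rw [max_lt_iff]
      constructor
      · rcases eq_or_ne (M.charpoly - X ^ p) 0 with hz | hz
        · rw [hz, Polynomial.degree_zero]
          exact_mod_cast WithBot.bot_lt_coe p
        · have := Polynomial.degree_sub_lt
            (by rw [Polynomial.degree_X_pow, Polynomial.degree_eq_natDegree hmonic.ne_zero, hdeg])
            hmonic.ne_zero
            (by rw [hmonic.leadingCoeff, Polynomial.leadingCoeff_X_pow])
          rwa [Polynomial.degree_eq_natDegree hmonic.ne_zero, hdeg] at this
      · apply lt_of_le_of_lt Polynomial.degree_one_le
        exact_mod_cast hp.pos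
    have hqnd : q.natDegree < p := (Polynomial.natDegree_lt_iff_degree_lt h0).mpr hqd
    apply Polynomial.eq_zero_of_natDegree_lt_card_of_eval_eq_zero'
      q (Polynomial.nthRootsFinset p (1 : ℂ))
    · intro ω hω
      have hωp : ω ^ p = 1 := (Polynomial.mem_nthRootsFinset hp.pos 1).mp hω
      rw [hqdef]
      rw [Polynomial.eval_sub, charpoly_eval, eigen_det hp d hd m hm hωp]
      simp [hωp]
    · rwa [(Complex.isPrimitiveRoot_exp p hp.ne_zero).card_nthRootsFinset]
  have heval : M.charpoly.eval lam = 0 := by rw [charpoly_eval]; exact h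
  rw [hcp] at heval
  simp only [Polynomial.eval_sub, Polynomial.eval_pow, Polynomial.eval_X,
    Polynomial.eval_one] at heval
  exact sub_eq_zero.mp heval

end Helpers

open Pointwise in
/-- If `A`, `B` are tadpole matrices with head parameters `k, ℓ ∈ {1, …, p-1}` such
that `k + ℓ ≢ 0 (mod p)` (so none of `A`, `B`, `AB` is diagonal), then every
eigenvalue of `AB` is the product of an eigenvalue of `A` and an eigenvalue of `B`. -/
theorem tadpole_spectrum_mul_subset_of_nondiagonal (p : ℕ) (hp : p.Prime) (hodd : Odd p)
    (dA dB : Fin p → ℂ) (k ℓ : ℕ) (a b : Fin p → ℕ)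
    (hdA : ∀ i, ‖dA i‖ = 1) (hdetA : ∏ i, dA i = 1)
    (hk1 : 1 ≤ k) (hk2 : k ≤ p - 1)
    (ha : ∀ j, a j < p) (ha0 : ∀ j : Fin p, (j : ℕ) = 0 → a j = 0)
    (hdB : ∀ i, ‖dB i‖ = 1) (hdetB : ∏ i, dB i = 1)
    (hl1 : 1 ≤ ℓ) (hl2 : ℓ ≤ p - 1)
    (hb : ∀ j, b j < p) (hb0 : ∀ j : Fin p, (j : ℕ) = 0 → b j = 0)
    (hkl : (k + ℓ) % p ≠ 0) :
    spectrum ℂ (tadpole p dA k a * tadpole p dB ℓ b) ⊆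
      spectrum ℂ (tadpole p dA k a) * spectrum ℂ (tadpole p dB ℓ b) := by
  haveI : NeZero p := ⟨hp.ne_zero⟩
  intro lam hlam
  have hkp : k < p := lt_of_le_of_lt hk2 (Nat.sub_lt hp.pos one_pos)
  have hlp : ℓ < p := lt_of_le_of_lt hl2 (Nat.sub_lt hp.pos one_pos)
  have hknd : ¬ p ∣ k := fun hdvd =>
    absurd (Nat.le_of_dvd hk1 hdvd) (not_le.mpr hkp)
  have hlnd : ¬ p ∣ ℓ := fun hdvd =>
    absurd (Nat.le_of_dvd hl1 hdvd) (not_le.mpr hlp)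
  have hklnd : ¬ p ∣ (k + ℓ) := fun hdvd => hkl (Nat.dvd_iff_mod_eq_zero.mp hdvd)
  set tA : Fin p → ℂ := fun j => xi p ^ ((j : ℕ) * k + a j * p) with htA
  set tB : Fin p → ℂ := fun j => xi p ^ ((j : ℕ) * ℓ + b j * p) with htB
  set HA : Matrix (Fin p) (Fin p) ℂ := Matrix.diagonal dA * cycleMatrix p ^ k with hHA
  set HB : Matrix (Fin p) (Fin p) ℂ := Matrix.diagonal dB * cycleMatrix p ^ ℓ with hHB
  have hAeq : tadpole p dA k a = Matrix.fromBlocks HA 0 0 (Matrix.diagonal tA) := rfl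
  have hBeq : tadpole p dB ℓ b = Matrix.fromBlocks HB 0 0 (Matrix.diagonal tB) := rfl
  have hprod : tadpole p dA k a * tadpole p dB ℓ b
      = Matrix.fromBlocks (HA * HB) 0 0 (Matrix.diagonal fun j => tA j * tB j) := by
    rw [hAeq, hBeq, Matrix.fromBlocks_multiply]
    simp [Matrix.diagonal_mul_diagonal]
  set d' : Fin p → ℂ := fun i => dA i * dB (i + (k : Fin p)) with hd'
  have hhead : HA * HB = Matrix.diagonal d' * cycleMatrix p ^ (k + ℓ) := by
    rw [hHA, hHB]
    calc Matrix.diagonal dA * cycleMatrix p ^ k * (Matrix.diagonal dB * cycleMatrix p ^ ℓ)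
        = Matrix.diagonal dA * (cycleMatrix p ^ k * Matrix.diagonal dB) * cycleMatrix p ^ ℓ := by
          rw [mul_assoc, mul_assoc, mul_assoc]
      _ = Matrix.diagonal dA * (Matrix.diagonal (fun i => dB (i + (k : Fin p)))
            * cycleMatrix p ^ k) * cycleMatrix p ^ ℓ := by
          rw [cycleMatrix_pow_mul_diagonal]
      _ = Matrix.diagonal d' * cycleMatrix p ^ (k + ℓ) := by
          rw [pow_add, hd', ← Matrix.diagonal_mul_diagonal]
          rw [mul_assoc, mul_assoc, mul_assoc]
  have hd'1 : ∏ i, d' i = 1 := by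
    rw [hd', Finset.prod_mul_distrib, hdetA, one_mul]
    have hre : ∏ x : Fin p, dB (x + (k : Fin p)) = ∏ x, dB x :=
      Fintype.prod_equiv (Equiv.addRight ((k : Fin p))) _ _ (fun i => rfl)
    rw [hre]
    exact hdetB
  have htB0 : tB ⟨0, hp.pos⟩ = 1 := by
    rw [htB]
    simp [hb0 ⟨0, hp.pos⟩ rfl, hb0 0 (by simp)]
  have htA0 : tA ⟨0, hp.pos⟩ = 1 := by
    rw [htA]
    simp [ha0 ⟨0, hp.pos⟩ rfl, ha0 0 (by simp)]
  rw [mem_spectrum_iff_det, hprod, det_smul_one_sub_fromBlocks] at hlam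
  rcases mul_eq_zero.mp hlam with hH | hT
  · -- head case
    rw [hhead] at hH
    have hpow : lam ^ p = 1 := pow_eq_one_of_det hp d' hd'1 (k + ℓ) hklnd lam hH
    have h1 : lam ∈ spectrum ℂ (tadpole p dA k a) := by
      rw [mem_spectrum_iff_det, hAeq, det_smul_one_sub_fromBlocks,
        eigen_det hp dA hdetA k hknd hpow, zero_mul]
    have h2 : (1 : ℂ) ∈ spectrum ℂ (tadpole p dB ℓ b) := by
      rw [mem_spectrum_iff_det, hBeq, det_smul_one_sub_fromBlocks,
        det_smul_one_sub_diagonal]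
      rw [Finset.prod_eq_zero (Finset.mem_univ (⟨0, hp.pos⟩ : Fin p))
        (by rw [htB0]; simp), mul_zero]
    have := Set.mul_mem_mul h1 h2
    rwa [mul_one] at this
  · -- tail case
    rw [det_smul_one_sub_diagonal] at hT
    obtain ⟨j, -, hj⟩ := Finset.prod_eq_zero_iff.mp hT
    have hlam' : lam = tA j * tB j := by
      have := sub_eq_zero.mp hj
      exact this
    have h1 : tA j ∈ spectrum ℂ (tadpole p dA k a) := by
      rw [mem_spectrum_iff_det, hAeq, det_smul_one_sub_fromBlocks,
        det_smul_one_sub_diagonal]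
      rw [Finset.prod_eq_zero (Finset.mem_univ j) (by simp), mul_zero]
    have h2 : tB j ∈ spectrum ℂ (tadpole p dB ℓ b) := by
      rw [mem_spectrum_iff_det, hBeq, det_smul_one_sub_fromBlocks,
        det_smul_one_sub_diagonal]
      rw [Finset.prod_eq_zero (Finset.mem_univ j) (by simp), mul_zero]
    rw [hlam']
    exact Set.mul_mem_mul h1 h2
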